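/- Let p, d, L be positive integers. On a probability space let P₁, …, P_L be independent and identically distributed random real p×d matrices such that almost surely Pℓᵀ Pℓ = I_d for every ℓ ∈ {1, …, L}. Set Π^∞ := 𝔼[P₁ P₁ᵀ] (entrywise expectation) and Π̂ := (1/L) Σ_{ℓ=1}^L Pℓ Pℓᵀ. Then 𝔼[ ‖Π̂ − Π^∞‖_op ] ≤ p (2π)^{1/2} / L^{1/2}. -/

import Mathlib

open Matrix MeasureTheory ProbabilityTheory
open scoped MeasureTheory ProbabilityTheory

/-- Matrices over `ℝ` carry the product (entrywise Borel) σ-algebra. -/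
instance matrixMeasurableSpace {m n : ℕ} : MeasurableSpace (Matrix (Fin m) (Fin n) ℝ) :=
  (inferInstance : MeasurableSpace (Fin m → Fin n → ℝ))

/-- The ℓ²→ℓ² operator norm (spectral norm) of a real square matrix. -/
noncomputable def opNorm {p : ℕ} (M : Matrix (Fin p) (Fin p) ℝ) : ℝ :=
  ‖LinearMap.toContinuousLinearMap (Matrix.toEuclideanLin M)‖

lemma sqrt_le_am (a z : ℝ) (ha : 0 < a) (hz : 0 ≤ z) :
    Real.sqrt z ≤ (z + a ^ 2) / (2 * a) := by
  rw [le_div_iff₀ (by positivity)]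
  nlinarith [Real.sq_sqrt hz, Real.sqrt_nonneg z, sq_nonneg (Real.sqrt z - a)]

lemma opNorm_nonneg {p : ℕ} (M : Matrix (Fin p) (Fin p) ℝ) : 0 ≤ opNorm M :=
  norm_nonneg _

lemma opNorm_le_frob {p : ℕ} (M : Matrix (Fin p) (Fin p) ℝ) :
    opNorm M ≤ Real.sqrt (∑ i, ∑ j, (M i j) ^ 2) := by
  apply ContinuousLinearMap.opNorm_le_bound _ (Real.sqrt_nonneg _)
  intro x
  have happ : (LinearMap.toContinuousLinearMap (Matrix.toEuclideanLin M)) x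
      = Matrix.toEuclideanLin M x := rfl
  rw [happ, Matrix.toEuclideanLin_apply]
  have hx : ‖x‖ = Real.sqrt (∑ j, (x j) ^ 2) := by
    rw [EuclideanSpace.norm_eq]
    refine congrArg Real.sqrt (Finset.sum_congr rfl fun j _ => ?_)
    rw [Real.norm_eq_abs, sq_abs]
  have hy : ‖WithLp.toLp 2 (M *ᵥ x.ofLp)‖
      = Real.sqrt (∑ i, (∑ j, M i j * x j) ^ 2) := by
    rw [EuclideanSpace.norm_eq]
    refine congrArg Real.sqrt (Finset.sum_congr rfl fun i _ => ?_)
    rw [Real.norm_eq_abs, sq_abs]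
    rfl
  rw [hy, hx, ← Real.sqrt_mul (by positivity)]
  apply Real.sqrt_le_sqrt
  rw [Finset.sum_mul]
  exact Finset.sum_le_sum fun i _ => Finset.sum_mul_sq_le_sq_mul_sq _ _ _

lemma entry_bound {p d : ℕ} (A : Matrix (Fin p) (Fin d) ℝ) (h : Aᵀ * A = 1) (i j : Fin p) :
    |(A * Aᵀ) i j| ≤ 1 := by
  set B : Matrix (Fin p) (Fin p) ℝ := A * Aᵀ with hB
  have hsym : ∀ a b, B a b = B b a := by
    intro a b
    simp only [hB, Matrix.mul_apply, Matrix.transpose_apply]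
    exact Finset.sum_congr rfl fun k _ => mul_comm _ _
  have hBB : B * B = B := by
    rw [hB]
    calc A * Aᵀ * (A * Aᵀ) = A * (Aᵀ * A) * Aᵀ := by
          rw [Matrix.mul_assoc, Matrix.mul_assoc, Matrix.mul_assoc]
      _ = A * Aᵀ := by rw [h, Matrix.mul_one]
  have hBent : ∀ a b, B a b = ∑ k, A a k * A b k := by
    intro a b
    simp only [hB, Matrix.mul_apply, Matrix.transpose_apply]
  have hdiag_nonneg : ∀ a, 0 ≤ B a a := by
    intro a
    rw [hBent]
    exact Finset.sum_nonneg fun k _ => mul_self_nonneg _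
  have hdiag_le : ∀ a, B a a ≤ 1 := by
    intro a
    have h1 : B a a = ∑ k, (B a k) ^ 2 := by
      conv_lhs => rw [← hBB]
      rw [Matrix.mul_apply]
      exact Finset.sum_congr rfl fun k _ => by rw [hsym k a]; ring
    have h2 : (B a a) ^ 2 ≤ ∑ k, (B a k) ^ 2 :=
      Finset.single_le_sum (f := fun k => (B a k) ^ 2) (fun k _ => sq_nonneg _)
        (Finset.mem_univ a)
    nlinarith [hdiag_nonneg a]
  have hcs : (B i j) ^ 2 ≤ B i i * B j j := by
    rw [hBent i j, hBent i i, hBent j j]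
    calc (∑ k, A i k * A j k) ^ 2 ≤ (∑ k, (A i k) ^ 2) * ∑ k, (A j k) ^ 2 :=
          Finset.sum_mul_sq_le_sq_mul_sq Finset.univ _ _
      _ = (∑ k, A i k * A i k) * ∑ k, A j k * A j k := by simp [sq]
  have hsq1 : (B i j) ^ 2 ≤ 1 :=
    hcs.trans (mul_le_one₀ (hdiag_le i) (hdiag_nonneg j) (hdiag_le j))
  rw [abs_le]
  constructor <;> nlinarith

/-- Let `P₁, …, P_L` be i.i.d. random real `p × d` matrices with `Pℓᵀ Pℓ = I_d`
almost surely. With `Π^∞ = 𝔼[P₁ P₁ᵀ]` (entrywise expectation) and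
`Π̂ = (1/L) ∑ℓ Pℓ Pℓᵀ`, we have `𝔼[‖Π̂ − Π^∞‖_op] ≤ p √(2π) / √L`. -/
theorem stmt2 {Ω : Type*} [MeasureSpace Ω] [IsProbabilityMeasure (ℙ : Measure Ω)]
    (p d L : ℕ) (hp : 0 < p) (hd : 0 < d) (hL : 0 < L)
    (P : Fin L → Ω → Matrix (Fin p) (Fin d) ℝ)
    (hmeas : ∀ ℓ, Measurable (P ℓ))
    (hindep : iIndepFun P (ℙ : Measure Ω))
    (hident : ∀ ℓ, IdentDistrib (P ℓ) (P ⟨0, hL⟩) (ℙ : Measure Ω) (ℙ : Measure Ω))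
    (horth : ∀ ℓ, ∀ᵐ ω ∂(ℙ : Measure Ω), (P ℓ ω)ᵀ * P ℓ ω = 1)
    (PiInf : Matrix (Fin p) (Fin p) ℝ)
    (hPiInf : ∀ i j, PiInf i j = ∫ ω, (P ⟨0, hL⟩ ω * (P ⟨0, hL⟩ ω)ᵀ) i j ∂(ℙ : Measure Ω))
    (PiHat : Ω → Matrix (Fin p) (Fin p) ℝ)
    (hPiHat : ∀ ω, PiHat ω = (L : ℝ)⁻¹ • ∑ ℓ, P ℓ ω * (P ℓ ω)ᵀ) :
    ∫ ω, opNorm (PiHat ω - PiInf) ∂(ℙ : Measure Ω)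
      ≤ p * Real.sqrt (2 * Real.pi) / Real.sqrt L := by
  classical
  have hL' : (0 : ℝ) < L := by exact_mod_cast hL
  have hp' : (0 : ℝ) < p := by exact_mod_cast hp
  -- almost sure bound on the entries of `P ℓ ω * (P ℓ ω)ᵀ`
  have hbd : ∀ ℓ : Fin L, ∀ᵐ ω ∂(ℙ : Measure Ω),
      ∀ i j : Fin p, |(P ℓ ω * (P ℓ ω)ᵀ) i j| ≤ 1 := by
    intro ℓ
    filter_upwards [horth ℓ] with ω hω
    intro i j
    exact entry_bound _ hω i j
  -- key per-entry second-moment bound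
  have hkey : ∀ i j : Fin p,
      Integrable (fun ω => (PiHat ω i j - PiInf i j) ^ 2) (ℙ : Measure Ω) ∧
      ∫ ω, (PiHat ω i j - PiInf i j) ^ 2 ∂(ℙ : Measure Ω) ≤ 1 / L := by
    intro i j
    set g : Matrix (Fin p) (Fin d) ℝ → ℝ := fun A => (A * Aᵀ) i j with hgdef
    have hg : Measurable g := by
      have hgeq : g = fun A => ∑ k, A i k * A j k := by
        funext A; simp [hgdef, Matrix.mul_apply]
      rw [hgeq]
      exact Finset.measurable_sum _ fun k _ =>
        Measurable.mul (f := fun A : Matrix (Fin p) (Fin d) ℝ => A i k) (g := fun A => A j k)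
          ((measurable_pi_apply k).comp (measurable_pi_apply i))
          ((measurable_pi_apply k).comp (measurable_pi_apply j))
    set Y : Fin L → Ω → ℝ := fun ℓ => g ∘ P ℓ with hYdef
    have hYmeas : ∀ ℓ, Measurable (Y ℓ) := fun ℓ => hg.comp (hmeas ℓ)
    have hYbd : ∀ ℓ, ∀ᵐ ω ∂(ℙ : Measure Ω), ‖Y ℓ ω‖ ≤ 1 := by
      intro ℓ
      filter_upwards [hbd ℓ] with ω hω
      simpa [hYdef, hgdef, Real.norm_eq_abs] using hω i j
    have hYm2 : ∀ ℓ, MemLp (Y ℓ) 2 (ℙ : Measure Ω) :=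
      fun ℓ => MemLp.of_bound (hYmeas ℓ).aestronglyMeasurable 1 (hYbd ℓ)
    have hYint : ∀ ℓ, Integrable (Y ℓ) (ℙ : Measure Ω) :=
      fun ℓ => (hYm2 ℓ).integrable one_le_two
    have hEY : ∀ ℓ, ∫ ω, Y ℓ ω ∂(ℙ : Measure Ω) = PiInf i j := by
      intro ℓ
      rw [hPiInf i j]
      exact ((hident ℓ).comp hg).integral_eq
    have hSm2 : MemLp (∑ ℓ, Y ℓ) 2 (ℙ : Measure Ω) :=
      memLp_finset_sum' _ fun ℓ _ => hYm2 ℓ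
    have hES : ∫ ω, (∑ ℓ, Y ℓ) ω ∂(ℙ : Measure Ω) = L * PiInf i j := by
      simp_rw [Finset.sum_apply]
      rw [integral_finset_sum _ fun ℓ _ => hYint ℓ]
      simp [hEY]
    have hvar : variance (∑ ℓ, Y ℓ) (ℙ : Measure Ω) = ∑ ℓ, variance (Y ℓ) (ℙ : Measure Ω) :=
      IndepFun.variance_sum (fun ℓ _ => hYm2 ℓ)
        (fun a _ b _ hab => ((hindep.comp (fun _ => g) fun _ => hg).indepFun hab))
    have hvle : ∀ ℓ, variance (Y ℓ) (ℙ : Measure Ω) ≤ 1 := by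
      intro ℓ
      have h1 : variance (Y ℓ) (ℙ : Measure Ω) ≤ ∫ ω, (Y ℓ ω) ^ 2 ∂(ℙ : Measure Ω) :=
        variance_le_expectation_sq (hYmeas ℓ).aestronglyMeasurable
      have h2 : ∫ ω, (Y ℓ ω) ^ 2 ∂(ℙ : Measure Ω) ≤ ∫ _ω, (1 : ℝ) ∂(ℙ : Measure Ω) := by
        apply integral_mono_ae (hYm2 ℓ).integrable_sq (integrable_const 1)
        filter_upwards [hYbd ℓ] with ω hω
        have : |Y ℓ ω| ≤ 1 := by simpa [Real.norm_eq_abs] using hω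
        nlinarith [abs_nonneg (Y ℓ ω), sq_abs (Y ℓ ω)]
      have h3 : ∫ _ω, (1 : ℝ) ∂(ℙ : Measure Ω) = 1 := by simp
      exact h1.trans (h2.trans_eq h3)
    have hvS : variance (∑ ℓ, Y ℓ) (ℙ : Measure Ω) ≤ L := by
      rw [hvar]
      calc ∑ ℓ, variance (Y ℓ) (ℙ : Measure Ω) ≤ ∑ _ℓ : Fin L, (1 : ℝ) :=
            Finset.sum_le_sum fun ℓ _ => hvle ℓ
        _ = L := by simp
    set m : ℝ := ∫ ω, (∑ ℓ, Y ℓ) ω ∂(ℙ : Measure Ω) with hm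
    have hentry : ∀ ω, PiHat ω i j - PiInf i j = (L : ℝ)⁻¹ * ((∑ ℓ, Y ℓ) ω - m) := by
      intro ω
      rw [hES, hPiHat ω]
      simp only [Matrix.smul_apply, Matrix.sum_apply, smul_eq_mul, Finset.sum_apply]
      have hYe : ∀ ℓ, Y ℓ ω = (P ℓ ω * (P ℓ ω)ᵀ) i j := fun ℓ => rfl
      rw [mul_sub, ← mul_assoc, inv_mul_cancel₀ hL'.ne', one_mul]
      congr 1
    have hfun : (fun ω => (PiHat ω i j - PiInf i j) ^ 2)
        = fun ω => ((L : ℝ)⁻¹) ^ 2 * ((∑ ℓ, Y ℓ) ω - m) ^ 2 :=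
      funext fun ω => by rw [hentry ω, mul_pow]
    have hSsub : MemLp (fun ω => (∑ ℓ, Y ℓ) ω - m) 2 (ℙ : Measure Ω) :=
      hSm2.sub (memLp_const m)
    have hintSq : Integrable (fun ω => ((∑ ℓ, Y ℓ) ω - m) ^ 2) (ℙ : Measure Ω) :=
      hSsub.integrable_sq
    have hveq : ∫ ω, ((∑ ℓ, Y ℓ) ω - m) ^ 2 ∂(ℙ : Measure Ω)
        = variance (∑ ℓ, Y ℓ) (ℙ : Measure Ω) := by
      rw [variance_eq_integral hSm2.aestronglyMeasurable.aemeasurable]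
    constructor
    · rw [hfun]; exact hintSq.const_mul _
    · rw [hfun, integral_const_mul, hveq]
      calc ((L : ℝ)⁻¹) ^ 2 * variance (∑ ℓ, Y ℓ) (ℙ : Measure Ω)
          ≤ ((L : ℝ)⁻¹) ^ 2 * (L : ℝ) :=
            mul_le_mul_of_nonneg_left hvS (sq_nonneg _)
        _ = 1 / (L : ℝ) := by
          field_simp
  -- sum of squared entries
  set Z : Ω → ℝ := fun ω => ∑ i, ∑ j, (PiHat ω i j - PiInf i j) ^ 2 with hZdef
  have hZint : Integrable Z (ℙ : Measure Ω) :=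
    integrable_finset_sum _ fun i _ => integrable_finset_sum _ fun j _ => (hkey i j).1
  have hZnonneg : ∀ ω, 0 ≤ Z ω := fun ω =>
    Finset.sum_nonneg fun i _ => Finset.sum_nonneg fun j _ => sq_nonneg _
  have hZle : ∫ ω, Z ω ∂(ℙ : Measure Ω) ≤ p ^ 2 / L := by
    have h1 : ∫ ω, Z ω ∂(ℙ : Measure Ω)
        = ∑ i, ∑ j, ∫ ω, (PiHat ω i j - PiInf i j) ^ 2 ∂(ℙ : Measure Ω) := by
      rw [hZdef]
      rw [integral_finset_sum _ fun i _ => integrable_finset_sum _ fun j _ => (hkey i j).1]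
      exact Finset.sum_congr rfl fun i _ => integral_finset_sum _ fun j _ => (hkey i j).1
    rw [h1]
    calc ∑ i, ∑ j, ∫ ω, (PiHat ω i j - PiInf i j) ^ 2 ∂(ℙ : Measure Ω)
        ≤ ∑ _i : Fin p, ∑ _j : Fin p, (1 / L : ℝ) :=
          Finset.sum_le_sum fun i _ => Finset.sum_le_sum fun j _ => (hkey i j).2
      _ = p ^ 2 / L := by
          simp [Finset.sum_const, Finset.card_univ]
          field_simp
  set a : ℝ := p / Real.sqrt L with hadef
  have ha : 0 < a := div_pos hp' (Real.sqrt_pos.2 hL')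
  have ha2 : a ^ 2 = p ^ 2 / L := by
    rw [hadef, div_pow, Real.sq_sqrt hL'.le]
  have hpt : ∀ ω, opNorm (PiHat ω - PiInf) ≤ (Z ω + a ^ 2) / (2 * a) := by
    intro ω
    have h1 : opNorm (PiHat ω - PiInf) ≤ Real.sqrt (Z ω) := by
      have h := opNorm_le_frob (PiHat ω - PiInf)
      simpa [hZdef, Matrix.sub_apply] using h
    exact h1.trans (sqrt_le_am a _ ha (hZnonneg ω))
  have hmono : ∫ ω, opNorm (PiHat ω - PiInf) ∂(ℙ : Measure Ω)
      ≤ ∫ ω, (Z ω + a ^ 2) / (2 * a) ∂(ℙ : Measure Ω) :=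
    integral_mono_of_nonneg (Filter.Eventually.of_forall fun ω => opNorm_nonneg _)
      (((hZint.add (integrable_const _))).div_const _)
      (Filter.Eventually.of_forall hpt)
  have hint2 : ∫ ω, (Z ω + a ^ 2) / (2 * a) ∂(ℙ : Measure Ω)
      = ((∫ ω, Z ω ∂(ℙ : Measure Ω)) + a ^ 2) / (2 * a) := by
    rw [integral_div, integral_add hZint (integrable_const _)]
    simp
  have hfin : ((∫ ω, Z ω ∂(ℙ : Measure Ω)) + a ^ 2) / (2 * a) ≤ a := by
    rw [div_le_iff₀ (by positivity)]
    nlinarith [hZle, ha2]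
  have h2pi : (1 : ℝ) ≤ Real.sqrt (2 * Real.pi) := by
    rw [show (1 : ℝ) = Real.sqrt 1 from Real.sqrt_one.symm]
    apply Real.sqrt_le_sqrt
    nlinarith [Real.pi_gt_three]
  calc ∫ ω, opNorm (PiHat ω - PiInf) ∂(ℙ : Measure Ω)
      ≤ ((∫ ω, Z ω ∂(ℙ : Measure Ω)) + a ^ 2) / (2 * a) := hmono.trans_eq hint2
    _ ≤ a := hfin
    _ = p * 1 / Real.sqrt L := by rw [hadef, mul_one]
    _ ≤ p * Real.sqrt (2 * Real.pi) / Real.sqrt L := by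
        gcongr
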